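/- Let D be a linearly connected digraph with strong components D_1, ..., D_η, and suppose D_p is nontrivial while D_{p+1}, ..., D_{p+ζ} are trivial for some ζ ≥ 1. Let v be the unique vertex of V_{p+1}, let Λ := {k ∈ ZMod κ_p : some vertex of U_k^{(p)} has an arc to v}, and for j ∈ ZMod κ_p and an integer i ≥ 0 define the subset i + L_{j→v} := {k − j + i + 1 : k ∈ Λ} of ZMod κ_p. Then for every i with 0 ≤ i ≤ ζ − 1, all j_1, j_2 ∈ ZMod κ_p, and every l ∈ ZMod κ_p, the following are equivalent: (a) l ∈ (i + L_{j_1→v}) ∩ (i + L_{j_2→v}); (b) there exists a positive integer N such that for every integer L ≥ N whose residue class modulo κ_p equals l, the unique vertex of V_{p+i+1} is an L-step prey of every vertex of U_{j_1}^{(p)} and of every vertex of U_{j_2}^{(p)}. -/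

import Mathlib

/-- A digraph: a finite vertex type with an irreflexive arc relation (no loops). -/
structure Digraph' (V : Type*) where
  Adj : V → V → Prop
  irrefl : ∀ v, ¬ Adj v v

namespace Digraph'

variable {V : Type*}

/-- There is a directed walk of length `m` from `x` to `y` in `D`;
i.e. `y` is an `m`-step prey of `x`. -/
def HasWalk (D : Digraph' V) (m : ℕ) (x y : V) : Prop :=
  ∃ f : ℕ → V, f 0 = x ∧ f m = y ∧ ∀ t, t < m → D.Adj (f t) (f (t + 1))

/-- There is a directed walk of length `m` from `x` to `y` staying inside `S`. -/
def HasWalkIn (D : Digraph' V) (S : Set V) (m : ℕ) (x y : V) : Prop :=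
  ∃ f : ℕ → V, f 0 = x ∧ f m = y ∧ (∀ t, t ≤ m → f t ∈ S) ∧
    ∀ t, t < m → D.Adj (f t) (f (t + 1))

/-- The `m`-step competition graph `C(D^m)` of `D`. -/
def compGraph (D : Digraph' V) (m : ℕ) : SimpleGraph V where
  Adj u v := u ≠ v ∧ ∃ z, D.HasWalk m u z ∧ D.HasWalk m v z
  symm := by
    constructor
    rintro u v ⟨hne, z, h1, h2⟩
    exact ⟨hne.symm, z, h2, h1⟩
  loopless := ⟨fun v h => h.1 rfl⟩

/-- The sequence `{C(D^m)}_{m ≥ 1}` converges. -/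
def CompConverges (D : Digraph' V) : Prop :=
  ∃ N : ℕ, 1 ≤ N ∧ ∀ m, N ≤ m → D.compGraph m = D.compGraph N

/-- The sequence `{C(D^m)}_{m ≥ 1}` converges to the graph `G`. -/
def CompConvergesTo (D : Digraph' V) (G : SimpleGraph V) : Prop :=
  ∃ N : ℕ, 1 ≤ N ∧ ∀ m, N ≤ m → D.compGraph m = G

/-- `D` is linearly connected with strong components `Vset 1, …, Vset η`. -/
structure IsLinConn (D : Digraph' V) (η : ℕ) (Vset : ℕ → Set V) : Prop where
  nonempty : ∀ i, 1 ≤ i → i ≤ η → (Vset i).Nonempty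
  cover : ∀ v : V, ∃ i, 1 ≤ i ∧ i ≤ η ∧ v ∈ Vset i
  disjoint' : ∀ i j, 1 ≤ i → i ≤ η → 1 ≤ j → j ≤ η →
      ∀ v : V, v ∈ Vset i → v ∈ Vset j → i = j
  strong : ∀ i, 1 ≤ i → i ≤ η → ∀ x ∈ Vset i, ∀ y ∈ Vset i,
      ∃ m, D.HasWalkIn (Vset i) m x y
  arcs : ∀ x y : V, D.Adj x y → ∃ i, 1 ≤ i ∧
      ((i ≤ η ∧ x ∈ Vset i ∧ y ∈ Vset i) ∨
       (i + 1 ≤ η ∧ x ∈ Vset i ∧ y ∈ Vset (i + 1)))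
  linked : ∀ i, 1 ≤ i → i + 1 ≤ η → ∃ x ∈ Vset i, ∃ y ∈ Vset (i + 1), D.Adj x y

/-- A component with vertex set `S` is trivial if `S` is a singleton. -/
def IsTrivialComp (S : Set V) : Prop := ∃ v : V, S = {v}

/-- `κ` is the index of imprimitivity of the (strong) component with vertex set `S`:
the gcd of the lengths of all closed directed walks inside `S`. -/
def IsImprimIndex (D : Digraph' V) (S : Set V) (κ : ℕ) : Prop :=
  (∀ (x : V) (m : ℕ), x ∈ S → 0 < m → D.HasWalkIn S m x x → κ ∣ m) ∧
  ∀ d : ℕ, (∀ (x : V) (m : ℕ), x ∈ S → 0 < m → D.HasWalkIn S m x x → d ∣ m) → d ∣ κ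

/-- `u` is an imprimitivity labelling on `S`: along any arc inside `S` the label
increases by one.  Its fibers are the sets of imprimitivity. -/
def IsImprimLabelling (D : Digraph' V) (S : Set V) {κ : ℕ} (u : V → ZMod κ) : Prop :=
  ∀ x ∈ S, ∀ y ∈ S, D.Adj x y → u y = u x + 1

/-- `(k, l) ∈ I(D_{p,p+1})`: some arc goes from a vertex of `U_k^{(p)}` to a vertex of
`U_l^{(p+1)}`. -/
def InI (D : Digraph' V) (Vset : ℕ → Set V) {κ : ℕ → ℕ}
    (u : ∀ i : ℕ, V → ZMod (κ i)) (p : ℕ) (k : ZMod (κ p)) (l : ZMod (κ (p + 1))) : Prop :=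
  ∃ x ∈ Vset p, ∃ y ∈ Vset (p + 1), D.Adj x y ∧ u p x = k ∧ u (p + 1) y = l

/-- `(i, j)` is an edge of the bipartite graph `B_{p,p+1}`. -/
def BAdj (D : Digraph' V) (Vset : ℕ → Set V) {κ : ℕ → ℕ}
    (u : ∀ i : ℕ, V → ZMod (κ i)) (p : ℕ) (i : ZMod (κ p)) (j : ZMod (κ (p + 1))) : Prop :=
  ∃ (k : ZMod (κ p)) (l : ZMod (κ (p + 1))) (a : ℤ),
    InI D Vset u p k l ∧ i = k + 1 + (a : ZMod (κ p)) ∧ j = l + (a : ZMod (κ (p + 1)))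

/-- The competition skeleton graph (CS-graph) `PT_D^{(η)}`: vertices are pairs `⟨r, i⟩`
with `i ∈ ZMod (κ r)` (only `1 ≤ r ≤ η` carries edges); `⟨p, i⟩` and `⟨p+1, j⟩` are
adjacent exactly when `i` and `j` are adjacent in `B_{p,p+1}`. -/
def csGraph (D : Digraph' V) (Vset : ℕ → Set V) {κ : ℕ → ℕ}
    (u : ∀ i : ℕ, V → ZMod (κ i)) (η : ℕ) : SimpleGraph ((r : ℕ) × ZMod (κ r)) where
  Adj a b := ∃ p, 1 ≤ p ∧ p + 1 ≤ η ∧ ∃ (i : ZMod (κ p)) (j : ZMod (κ (p + 1))),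
    BAdj D Vset u p i j ∧
    ((a = ⟨p, i⟩ ∧ b = ⟨p + 1, j⟩) ∨ (a = ⟨p + 1, j⟩ ∧ b = ⟨p, i⟩))
  symm := by
    constructor
    rintro a b ⟨p, h1, h2, i, j, hB, hab⟩
    exact ⟨p, h1, h2, i, j, hB,
      hab.elim (fun h => Or.inr ⟨h.2, h.1⟩) (fun h => Or.inl ⟨h.2, h.1⟩)⟩
  loopless := by
    constructor
    rintro a ⟨p, _, _, i, j, _, hab⟩
    rcases hab with ⟨ha, hb⟩ | ⟨ha, hb⟩
    · have h : p = p + 1 := congrArg Sigma.fst (ha.symm.trans hb)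
      omega
    · have h : p + 1 = p := congrArg Sigma.fst (ha.symm.trans hb)
      omega

end Digraph'

section Aux

lemma Digraph'.numAux (A : AddSubmonoid ℕ) (κ Y : ℕ) (hκ : 0 < κ)
    (hY : Y ∈ A) (hX : Y + κ ∈ A) (hdvdY : κ ∣ Y) :
    ∃ N, ∀ m, N ≤ m → κ ∣ m → m ∈ A := by
  rcases Nat.eq_zero_or_pos Y with h0 | hYpos
  · subst h0
    refine ⟨0, fun m _ hdm => ?_⟩
    obtain ⟨n, rfl⟩ := hdm
    simpa [smul_eq_mul, Nat.mul_comm] using A.nsmul_mem (show κ ∈ A by simpa using hX) n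
  · obtain ⟨q, hq⟩ := hdvdY
    have hq0 : 0 < q := by
      rcases Nat.eq_zero_or_pos q with h | h
      · exfalso; rw [h, Nat.mul_zero] at hq; omega
      · exact h
    refine ⟨q * (Y + κ), fun m hm hdm => ?_⟩
    obtain ⟨n, hn⟩ := hdm
    set β := n % q with hβdef
    set K := n / q with hKdef
    have hnqK : q * K + β = n := Nat.div_add_mod n q
    have hβ : β < q := Nat.mod_lt _ hq0
    have hnge : q * (q + 1) ≤ n := by
      have h1 : κ * (q * (q + 1)) ≤ κ * n := by
        calc κ * (q * (q + 1)) = q * (κ * q + κ) := by ring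
          _ ≤ m := by rw [← hq]; exact hm
          _ = κ * n := hn
      exact Nat.le_of_mul_le_mul_left h1 hκ
    have hK : β ≤ K := by
      have : q + 1 ≤ K := by
        rw [hKdef, Nat.le_div_iff_mul_le hq0]
        calc (q + 1) * q = q * (q + 1) := by ring
          _ ≤ n := hnge
      omega
    obtain ⟨c, hc⟩ := Nat.exists_eq_add_of_le hK
    have hrep : m = c * Y + β * (Y + κ) := by
      calc m = κ * n := hn
        _ = κ * (q * (β + c) + β) := by rw [← hnqK, ← hc]
        _ = (κ * q) * (β + c) + β * κ := by ring
        _ = Y * (β + c) + β * κ := by rw [← hq]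
        _ = c * Y + β * (Y + κ) := by ring
    rw [hrep]
    exact A.add_mem (by simpa [smul_eq_mul] using A.nsmul_mem hY c)
      (by simpa [smul_eq_mul] using A.nsmul_mem hX β)

lemma Digraph'.numStep (A : AddSubmonoid ℕ) (κ : ℕ) (hκ : 0 < κ)
    (hκA : ∀ a ∈ A, κ ∣ a)
    (hgcd : ∀ d : ℕ, (∀ a ∈ A, d ∣ a) → d ∣ κ) :
    ∃ Y ∈ A, Y + κ ∈ A := by
  set s : Set ℤ := (fun n : ℕ => (n : ℤ)) '' (A : Set ℕ) with hs
  obtain ⟨g, hg⟩ := Int.subgroup_cyclic (AddSubgroup.closure s)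
  have hdiff : ∀ z ∈ AddSubgroup.closure s, ∃ x ∈ A, ∃ y ∈ A, z = (x : ℤ) - y := by
    intro z hz
    induction hz using AddSubgroup.closure_induction with
    | mem w hw =>
      obtain ⟨x, hx, rfl⟩ := hw
      exact ⟨x, hx, 0, A.zero_mem, by simp⟩
    | zero => exact ⟨0, A.zero_mem, 0, A.zero_mem, by simp⟩
    | add a b ha hb iha ihb =>
      obtain ⟨x1, hx1, y1, hy1, rfl⟩ := iha
      obtain ⟨x2, hx2, y2, hy2, rfl⟩ := ihb
      exact ⟨x1 + x2, A.add_mem hx1 hx2, y1 + y2, A.add_mem hy1 hy2, by push_cast; ring⟩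
    | neg a ha iha =>
      obtain ⟨x1, hx1, y1, hy1, rfl⟩ := iha
      exact ⟨y1, hy1, x1, hx1, by ring⟩
  have hgmem : g ∈ AddSubgroup.closure s := by
    rw [hg]
    exact AddSubgroup.subset_closure rfl
  obtain ⟨x, hx, y, hy, hxy⟩ := hdiff g hgmem
  have hgdvd : ∀ a ∈ A, g ∣ (a : ℤ) := by
    intro a ha
    have : (a : ℤ) ∈ AddSubgroup.closure s := AddSubgroup.subset_closure ⟨a, ha, rfl⟩
    rw [hg, AddSubgroup.mem_closure_singleton] at this
    obtain ⟨n, hn⟩ := this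
    exact Dvd.intro_left _ (by rw [← hn, zsmul_eq_mul])
  have hddvd : ∀ a ∈ A, g.natAbs ∣ a := by
    intro a ha
    have := Int.natAbs_dvd_natAbs.mpr (hgdvd a ha)
    simpa using this
  have hdκ : g.natAbs ∣ κ := hgcd _ hddvd
  have hκg : (κ : ℤ) ∣ g := by
    rw [hxy]
    exact dvd_sub (Int.natCast_dvd_natCast.mpr (hκA x hx)) (Int.natCast_dvd_natCast.mpr (hκA y hy))
  have hκd : κ ∣ g.natAbs := by
    have := Int.natAbs_dvd_natAbs.mpr hκg
    simpa using this
  have heq : g.natAbs = κ := Nat.dvd_antisymm hdκ hκd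
  rcases Int.natAbs_eq g with h | h
  · refine ⟨y, hy, ?_⟩
    have h' : g = (κ : ℤ) := by rw [h, heq]
    have : x = y + κ := by
      have : (x : ℤ) = y + κ := by omega
      exact_mod_cast this
    rwa [← this]
  · refine ⟨x, hx, ?_⟩
    have h' : g = -(κ : ℤ) := by rw [h, heq]
    have : y = x + κ := by
      have : (y : ℤ) = x + κ := by omega
      exact_mod_cast this
    rwa [← this]

lemma Digraph'.numerical (A : AddSubmonoid ℕ) (κ : ℕ) (hκ : 0 < κ)
    (hκA : ∀ a ∈ A, κ ∣ a)
    (hgcd : ∀ d : ℕ, (∀ a ∈ A, d ∣ a) → d ∣ κ) :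
    ∃ N, ∀ m, N ≤ m → κ ∣ m → m ∈ A := by
  obtain ⟨Y, hY, hX⟩ := Digraph'.numStep A κ hκ hκA hgcd
  exact Digraph'.numAux A κ Y hκ hY hX (hκA Y hY)

end Aux

namespace Digraph'

variable {V : Type*}

section WalkLemmas

variable {D : Digraph' V} {S : Set V} {x y z : V} {a b m : ℕ}

lemma HasWalkIn.hasWalk (h : D.HasWalkIn S m x y) : D.HasWalk m x y := by
  obtain ⟨f, h0, hm, -, hadj⟩ := h
  exact ⟨f, h0, hm, hadj⟩

lemma hasWalkIn_refl (hx : x ∈ S) : D.HasWalkIn S 0 x x :=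
  ⟨fun _ => x, rfl, rfl, fun _ _ => hx, fun t ht => by omega⟩

lemma HasWalk.trans (h1 : D.HasWalk a x y) (h2 : D.HasWalk b y z) :
    D.HasWalk (a + b) x z := by
  obtain ⟨f, f0, fa, fadj⟩ := h1
  obtain ⟨g, g0, gb, gadj⟩ := h2
  refine ⟨fun t => if t < a then f t else g (t - a), ?_, ?_, ?_⟩
  · rcases Nat.eq_zero_or_pos a with ha0 | ha
    · subst ha0
      simp only [Nat.lt_irrefl, if_false, Nat.sub_zero]
      rw [g0, ← fa, f0]
    · simp [ha, f0]
  · have hlt : ¬ a + b < a := by omega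
    simp only [hlt, if_false]
    rw [Nat.add_sub_cancel_left, gb]
  · intro t ht
    by_cases h1' : t + 1 < a
    · have h2' : t < a := by omega
      simp only [h1', h2', if_true]
      exact fadj t (by omega)
    · by_cases h2' : t < a
      · have hta : t + 1 = a := by omega
        have hh := fadj t (by omega)
        simp only [h1', h2', if_true, if_false]
        rw [hta, Nat.sub_self, g0, ← fa, ← hta]
        exact hh
      · have e1 : t + 1 - a = (t - a) + 1 := by omega
        simp only [h1', h2', if_false, e1]
        exact gadj (t - a) (by omega)

lemma HasWalkIn.trans (h1 : D.HasWalkIn S a x y) (h2 : D.HasWalkIn S b y z) :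
    D.HasWalkIn S (a + b) x z := by
  obtain ⟨f, f0, fa, fmem, fadj⟩ := h1
  obtain ⟨g, g0, gb, gmem, gadj⟩ := h2
  refine ⟨fun t => if t < a then f t else g (t - a), ?_, ?_, ?_, ?_⟩
  · rcases Nat.eq_zero_or_pos a with ha0 | ha
    · subst ha0
      simp only [Nat.lt_irrefl, if_false, Nat.sub_zero]
      rw [g0, ← fa, f0]
    · simp [ha, f0]
  · have hlt : ¬ a + b < a := by omega
    simp only [hlt, if_false]
    rw [Nat.add_sub_cancel_left, gb]
  · intro t ht
    by_cases h : t < a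
    · simp only [h, if_true]; exact fmem t (by omega)
    · simp only [h, if_false]; exact gmem (t - a) (by omega)
  · intro t ht
    by_cases h1' : t + 1 < a
    · have h2' : t < a := by omega
      simp only [h1', h2', if_true]
      exact fadj t (by omega)
    · by_cases h2' : t < a
      · have hta : t + 1 = a := by omega
        have hh := fadj t (by omega)
        simp only [h1', h2', if_true, if_false]
        rw [hta, Nat.sub_self, g0, ← fa, ← hta]
        exact hh
      · have e1 : t + 1 - a = (t - a) + 1 := by omega
        simp only [h1', h2', if_false, e1]
        exact gadj (t - a) (by omega)

lemma Adj.hasWalk (h : D.Adj x y) : D.HasWalk 1 x y :=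
  ⟨fun t => if t = 0 then x else y, by simp, by simp, fun t ht => by
    interval_cases t; simpa using h⟩

lemma hasWalk_zero (x : V) : D.HasWalk 0 x x := ⟨fun _ => x, rfl, rfl, by omega⟩

lemma HasWalkIn.shorten (h : D.HasWalkIn S m x y) (a : ℕ) (ha : a ≤ m) :
    ∃ z ∈ S, D.HasWalkIn S a x z ∧ D.HasWalkIn S (m - a) z y := by
  obtain ⟨f, f0, fm, fmem, fadj⟩ := h
  refine ⟨f a, fmem a ha, ⟨f, f0, rfl, fun t ht => fmem t (by omega),
    fun t ht => fadj t (by omega)⟩, ⟨fun t => f (a + t), by simp, ?_, ?_, ?_⟩⟩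
  · show f (a + (m - a)) = y
    rw [← fm]; congr 1; omega
  · intro t ht
    exact fmem (a + t) (by omega)
  · intro t ht
    show D.Adj (f (a + t)) (f (a + (t + 1)))
    have e : a + (t + 1) = (a + t) + 1 := rfl
    rw [e]
    exact fadj (a + t) (by omega)

lemma label_walkIn {κ : ℕ} {u : V → ZMod κ} (hu : D.IsImprimLabelling S u)
    {m : ℕ} {x y : V} (h : D.HasWalkIn S m x y) : u y = u x + (m : ZMod κ) := by
  induction m generalizing y with
  | zero =>
    obtain ⟨f, f0, fm, -, -⟩ := h
    rw [← fm, f0]; simp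
  | succ n ih =>
    obtain ⟨f, f0, fm, fmem, fadj⟩ := h
    have hyS : y ∈ S := by rw [← fm]; exact fmem (n + 1) le_rfl
    have hnS : f n ∈ S := fmem n (by omega)
    have harc : D.Adj (f n) y := by rw [← fm]; exact fadj n (by omega)
    have hstep := hu (f n) hnS y hyS harc
    have hwn : D.HasWalkIn S n x (f n) :=
      ⟨f, f0, rfl, fun t ht => fmem t (by omega), fun t ht => fadj t (by omega)⟩
    rw [hstep, ih hwn]
    push_cast
    ring

end WalkLemmas

/-- Decomposition of a walk from the nontrivial component `V_p` to the unique vertex of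
the trivial component `V_{p+i+1}`. -/
lemma decomp {D : Digraph' V} {η : ℕ} {Vset : ℕ → Set V}
    (hD : D.IsLinConn η Vset) (p ζ i : ℕ) (hp : 1 ≤ p) (hpζ : p + ζ ≤ η)
    (htr : ∀ t, 1 ≤ t → t ≤ ζ → IsTrivialComp (Vset (p + t)))
    (v : V) (hv : Vset (p + 1) = {v}) (hi : i + 1 ≤ ζ)
    (w : V) (hw : Vset (p + i + 1) = {w})
    {x : V} {L : ℕ} (hx : x ∈ Vset p) (hwalk : D.HasWalk L x w) :
    ∃ M z, M + 1 + i = L ∧ D.HasWalkIn (Vset p) M x z ∧ z ∈ Vset p ∧ D.Adj z v := by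
  classical
  obtain ⟨f, f0, fL, fadj⟩ := hwalk
  set comp : V → ℕ := fun z => (hD.cover z).choose with hcomp
  have hcomp1 : ∀ z : V, 1 ≤ comp z ∧ comp z ≤ η ∧ z ∈ Vset (comp z) :=
    fun z => (hD.cover z).choose_spec
  have hcompEq : ∀ (z : V) (q : ℕ), 1 ≤ q → q ≤ η → z ∈ Vset q → comp z = q := by
    intro z q h1 h2 hzq
    exact hD.disjoint' _ q (hcomp1 z).1 (hcomp1 z).2.1 h1 h2 z (hcomp1 z).2.2 hzq
  have hstep : ∀ a b : V, D.Adj a b → comp b = comp a ∨ comp b = comp a + 1 := by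
    intro a b hab
    obtain ⟨q, hq1, hcase⟩ := hD.arcs a b hab
    rcases hcase with ⟨hqη, haq, hbq⟩ | ⟨hqη, haq, hbq⟩
    · left; rw [hcompEq a q hq1 hqη haq, hcompEq b q hq1 hqη hbq]
    · right; rw [hcompEq a q hq1 (by omega) haq, hcompEq b (q + 1) (by omega) hqη hbq]
  have hmono : ∀ s d : ℕ, s + d ≤ L → comp (f s) ≤ comp (f (s + d)) := by
    intro s d
    induction d with
    | zero => intro _; exact le_rfl
    | succ e ih =>
      intro hsd
      have h1 := ih (by omega)
      have h2 := hstep (f (s + e)) (f (s + e + 1)) (fadj (s + e) (by omega))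
      have he : s + (e + 1) = s + e + 1 := rfl
      rw [he]
      omega
  have hfp : comp (f 0) = p := by rw [f0]; exact hcompEq x p hp (by omega) hx
  have hfw : comp (f L) = p + i + 1 := by
    rw [fL]
    exact hcompEq w (p + i + 1) (by omega) (by omega) (by rw [hw]; exact Set.mem_singleton w)
  have hL1 : 0 < L := by
    rcases Nat.eq_zero_or_pos L with h | h
    · exfalso; rw [h] at hfw; omega
    · exact h
  set P : ℕ → Prop := fun t => comp (f t) = p with hPdef
  have hP0 : P 0 := hfp
  set M := Nat.findGreatest P L with hM
  have hPM : P M := Nat.findGreatest_spec (Nat.zero_le L) hP0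
  have hML : M ≤ L := Nat.findGreatest_le L
  have hMlt : M < L := by
    rcases eq_or_lt_of_le hML with h | h
    · exfalso
      have : comp (f L) = p := by rw [← h]; exact hPM
      omega
    · exact h
  have hbelow : ∀ t, t ≤ M → comp (f t) = p := by
    intro t ht
    have h1 : comp (f 0) ≤ comp (f t) := by
      have := hmono 0 t (by omega)
      simpa using this
    have h2 : comp (f t) ≤ comp (f M) := by
      have := hmono t (M - t) (by omega)
      rwa [show t + (M - t) = M by omega] at this
    have h3 : comp (f M) = p := hPM
    omega
  have hwalkIn : D.HasWalkIn (Vset p) M x (f M) :=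
    ⟨f, f0, rfl, fun t ht => by
      have h := hbelow t ht
      have := (hcomp1 (f t)).2.2
      rwa [h] at this, fun t ht => fadj t (by omega)⟩
  have hnotP : ¬ P (M + 1) := Nat.findGreatest_is_greatest (n := L) (by omega) (by omega)
  have hM1 : comp (f (M + 1)) = p + 1 := by
    have hst := hstep (f M) (f (M + 1)) (fadj M (by omega))
    have hPM' : comp (f M) = p := hPM
    rcases hst with h | h
    · exact absurd (h.trans hPM') hnotP
    · rw [h, hPM']
  have hfM1v : f (M + 1) = v := by
    have h : f (M + 1) ∈ Vset (p + 1) := by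
      have h2 := (hcomp1 (f (M + 1))).2.2
      rwa [hM1] at h2
    rw [hv] at h
    exact h
  have hchain : ∀ s, s ≤ i → M + 1 + s ≤ L ∧ comp (f (M + 1 + s)) = p + 1 + s := by
    intro s hs
    induction s with
    | zero => exact ⟨by omega, by simpa using hM1⟩
    | succ e ih =>
      obtain ⟨hle, hce⟩ := ih (by omega)
      have hlt : M + 1 + e < L := by
        rcases eq_or_lt_of_le hle with h | h
        · exfalso; rw [h] at hce; omega
        · exact h
      obtain ⟨a, ha⟩ := htr (1 + e) (by omega) (by omega)
      have hfa : f (M + 1 + e) = a := by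
        have h := (hcomp1 (f (M + 1 + e))).2.2
        rw [hce, show p + 1 + e = p + (1 + e) by omega, ha] at h
        exact h
      have hadj := fadj (M + 1 + e) hlt
      have hst := hstep _ _ hadj
      rcases hst with h | h
      · exfalso
        have h2 : f (M + 1 + e + 1) ∈ Vset (p + (1 + e)) := by
          have h3 := (hcomp1 (f (M + 1 + e + 1))).2.2
          rwa [h, hce, show p + 1 + e = p + (1 + e) by omega] at h3
        rw [ha] at h2
        have h4 : f (M + 1 + e + 1) = a := h2
        rw [h4, hfa] at hadj
        exact D.irrefl a hadj
      · refine ⟨by omega, ?_⟩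
        show comp (f (M + 1 + e + 1)) = p + 1 + e + 1
        rw [h, hce]
  obtain ⟨hlei, hci⟩ := hchain i le_rfl
  have hLM : M + 1 + i = L := by
    rcases eq_or_lt_of_le hlei with h | h
    · exact h
    · exfalso
      have hfi : f (M + 1 + i) = w := by
        have h2 := (hcomp1 (f (M + 1 + i))).2.2
        rw [hci, show p + 1 + i = p + i + 1 by omega, hw] at h2
        exact h2
      have hadj := fadj (M + 1 + i) h
      have hst := hstep _ _ hadj
      rcases hst with hcase | hcase
      · have h2 : f (M + 1 + i + 1) ∈ Vset (p + i + 1) := by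
          have h3 := (hcomp1 (f (M + 1 + i + 1))).2.2
          rwa [hcase, hci, show p + 1 + i = p + i + 1 by omega] at h3
        rw [hw] at h2
        have h4 : f (M + 1 + i + 1) = w := h2
        rw [h4, hfi] at hadj
        exact D.irrefl w hadj
      · have hm := hmono (M + 1 + i + 1) (L - (M + 1 + i + 1)) (by omega)
        rw [show M + 1 + i + 1 + (L - (M + 1 + i + 1)) = L by omega] at hm
        rw [hcase, hci] at hm
        omega
  refine ⟨M, f M, hLM, hwalkIn, ?_, ?_⟩
  · have h := (hcomp1 (f M)).2.2
    have h2 : comp (f M) = p := hPM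
    rwa [h2] at h
  · rw [← hfM1v]
    exact fadj M (by omega)

/-- The unique walk along the chain of trivial components. -/
lemma chainWalk {D : Digraph' V} {η : ℕ} {Vset : ℕ → Set V}
    (hD : D.IsLinConn η Vset) (p ζ : ℕ) (hp : 1 ≤ p) (hpζ : p + ζ ≤ η)
    (htr : ∀ t, 1 ≤ t → t ≤ ζ → IsTrivialComp (Vset (p + t)))
    (v : V) (hv : Vset (p + 1) = {v}) :
    ∀ s, s + 1 ≤ ζ → ∀ b : V, Vset (p + s + 1) = {b} → D.HasWalk s v b := by
  intro s
  induction s with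
  | zero =>
    intro _ b hb
    have : v = b := by
      have h : v ∈ Vset (p + 1) := by rw [hv]; exact Set.mem_singleton v
      rw [show p + 0 + 1 = p + 1 by omega, hb] at h
      exact h
    rw [← this]
    exact hasWalk_zero v
  | succ s ih =>
    intro hs b hb
    obtain ⟨b', hb'⟩ := htr (s + 1) (by omega) (by omega)
    have hwalk' : D.HasWalk s v b' := ih (by omega) b' (by rw [show p + s + 1 = p + (s + 1) by omega]; exact hb')
    obtain ⟨xx, hxx, yy, hyy, hadj⟩ := hD.linked (p + s + 1) (by omega) (by omega)
    have hxb : xx = b' := by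
      rw [show p + s + 1 = p + (s + 1) by omega, hb'] at hxx
      exact hxx
    have hyb : yy = b := by
      rw [show p + s + 1 + 1 = p + (s + 1) + 1 by omega, hb] at hyy
      exact hyy
    have : D.HasWalk (s + 1) v b := hwalk'.trans (by rw [← hxb, ← hyb]; exact hadj.hasWalk)
    exact this

end Digraph'

open Digraph' in
/-- with `D_p` nontrivial and `D_{p+1}, …, D_{p+ζ}` trivial,
membership of `l` in `(i + L_{j₁→v}) ∩ (i + L_{j₂→v})` is equivalent to the unique
vertex of `V_{p+i+1}` being an `L`-step prey of every vertex of `U_{j₁}^{(p)}` and of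
every vertex of `U_{j₂}^{(p)}` for all large `L ≡ l (mod κ_p)`. -/
theorem stmt18 {V : Type*} [Fintype V] (D : Digraph' V) (η : ℕ) (Vset : ℕ → Set V)
    (hD : D.IsLinConn η Vset)
    (p ζ : ℕ) (hp : 1 ≤ p) (hζ : 1 ≤ ζ) (hpζ : p + ζ ≤ η)
    (hpnt : ¬ IsTrivialComp (Vset p))
    (htr : ∀ t, 1 ≤ t → t ≤ ζ → IsTrivialComp (Vset (p + t)))
    (κ : ℕ → ℕ) (u : ∀ i : ℕ, V → ZMod (κ i))
    (hκ : IsImprimIndex D (Vset p) (κ p))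
    (hu : IsImprimLabelling D (Vset p) (u p))
    (v : V) (hv : Vset (p + 1) = {v})
    (i : ℕ) (hi : i + 1 ≤ ζ)
    (j₁ j₂ l : ZMod (κ p))
    (w : V) (hw : Vset (p + i + 1) = {w}) :
    ((∃ k : ZMod (κ p), (∃ x ∈ Vset p, u p x = k ∧ D.Adj x v) ∧
        l = k - j₁ + (i : ZMod (κ p)) + 1) ∧
     (∃ k : ZMod (κ p), (∃ x ∈ Vset p, u p x = k ∧ D.Adj x v) ∧
        l = k - j₂ + (i : ZMod (κ p)) + 1)) ↔
    (∃ N, 1 ≤ N ∧ ∀ L : ℕ, N ≤ L → (L : ZMod (κ p)) = l →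
       (∀ x ∈ Vset p, u p x = j₁ → D.HasWalk L x w) ∧
       (∀ x ∈ Vset p, u p x = j₂ → D.HasWalk L x w)) := by
    classical
  have hpη : p ≤ η := by omega
  obtain ⟨x₀, hx₀⟩ := hD.nonempty p hp hpη
  obtain ⟨y₀, hy₀, hy₀ne⟩ : ∃ y ∈ Vset p, y ≠ x₀ := by
    by_contra hcon
    push_neg at hcon
    exact hpnt ⟨x₀, Set.eq_singleton_iff_unique_mem.mpr ⟨hx₀, fun z hz => hcon z hz⟩⟩
  obtain ⟨m₁, hm₁⟩ := hD.strong p hp hpη x₀ hx₀ y₀ hy₀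
  obtain ⟨m₂, hm₂⟩ := hD.strong p hp hpη y₀ hy₀ x₀ hx₀
  have hm₁pos : 0 < m₁ := by
    rcases Nat.eq_zero_or_pos m₁ with h | h
    · exfalso
      obtain ⟨f, f0, fm, -, -⟩ := hm₁
      rw [h] at fm
      apply hy₀ne
      rw [← fm, f0]
    · exact h
  have hmposwalk : D.HasWalkIn (Vset p) (m₁ + m₂) x₀ x₀ := hm₁.trans hm₂
  have hκpos : 0 < κ p := by
    have hd := hκ.1 x₀ (m₁ + m₂) hx₀ (by omega) hmposwalk
    rcases Nat.eq_zero_or_pos (κ p) with h | h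
    · exfalso
      rw [h] at hd
      simp only [Nat.zero_dvd] at hd
      omega
    · exact h
  haveI : NeZero (κ p) := ⟨hκpos.ne'⟩
  set A : AddSubmonoid ℕ :=
    { carrier := {m : ℕ | D.HasWalkIn (Vset p) m x₀ x₀}
      zero_mem' := hasWalkIn_refl hx₀
      add_mem' := fun ha hb => HasWalkIn.trans ha hb } with hA
  have hκA : ∀ a ∈ A, κ p ∣ a := by
    intro a ha
    rcases Nat.eq_zero_or_pos a with h | h
    · simp [h]
    · exact hκ.1 x₀ a hx₀ h ha
  have hgcd : ∀ d : ℕ, (∀ a ∈ A, d ∣ a) → d ∣ κ p := by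
    intro d hd
    apply hκ.2
    intro z m hz hm hwz
    obtain ⟨a, hwa⟩ := hD.strong p hp hpη x₀ hx₀ z hz
    obtain ⟨b, hwb⟩ := hD.strong p hp hpη z hz x₀ hx₀
    have h1 : a + b ∈ A := hwa.trans hwb
    have h2 : a + (m + b) ∈ A := hwa.trans (hwz.trans hwb)
    have hd1 := hd _ h1
    have hd2 := hd _ h2
    have h3 : d ∣ (a + (m + b)) - (a + b) := Nat.dvd_sub hd2 hd1
    rwa [show a + (m + b) - (a + b) = m by omega] at h3
  obtain ⟨NA, hNA⟩ := Digraph'.numerical A (κ p) hκpos hκA hgcd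
  set aTo : V → ℕ :=
    fun z => if h : z ∈ Vset p then (hD.strong p hp hpη z h x₀ hx₀).choose else 0 with haTo
  set aFrom : V → ℕ :=
    fun z => if h : z ∈ Vset p then (hD.strong p hp hpη x₀ hx₀ z h).choose else 0 with haFrom
  have hwaTo : ∀ x, ∀ h : x ∈ Vset p, D.HasWalkIn (Vset p) (aTo x) x x₀ := by
    intro x hxp
    rw [haTo]
    simp only [dif_pos hxp]
    exact (hD.strong p hp hpη x hxp x₀ hx₀).choose_spec
  have hwaFrom : ∀ y, ∀ h : y ∈ Vset p, D.HasWalkIn (Vset p) (aFrom y) x₀ y := by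
    intro y hyp
    rw [haFrom]
    simp only [dif_pos hyp]
    exact (hD.strong p hp hpη x₀ hx₀ y hyp).choose_spec
  set NW := NA + Finset.univ.sup aTo + Finset.univ.sup aFrom with hNW
  have huniform : ∀ x ∈ Vset p, ∀ y ∈ Vset p, ∀ M : ℕ, NW ≤ M →
      (M : ZMod (κ p)) = u p y - u p x → D.HasWalkIn (Vset p) M x y := by
    intro x hxp y hyp M hM hMz
    have hwa := hwaTo x hxp
    have hwb := hwaFrom y hyp
    have hax : aTo x ≤ Finset.univ.sup aTo := Finset.le_sup (Finset.mem_univ x)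
    have hby : aFrom y ≤ Finset.univ.sup aFrom := Finset.le_sup (Finset.mem_univ y)
    set m := M - aTo x - aFrom y with hm
    have hMsum : M = aTo x + (m + aFrom y) := by omega
    have h1 : u p x₀ = u p x + ((aTo x : ℕ) : ZMod (κ p)) := label_walkIn hu hwa
    have h2 : u p y = u p x₀ + ((aFrom y : ℕ) : ZMod (κ p)) := label_walkIn hu hwb
    have hcast : ((aTo x : ℕ) : ZMod (κ p)) + ((m : ZMod (κ p)) + (aFrom y : ℕ)) =
        u p y - u p x := by
      have hc : ((aTo x + (m + aFrom y) : ℕ) : ZMod (κ p)) = (M : ZMod (κ p)) := by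
        rw [← hMsum]
      push_cast at hc
      rw [hMz] at hc
      exact hc
    have hm0 : (m : ZMod (κ p)) = 0 := by linear_combination hcast + h2 + h1
    have hdm : κ p ∣ m := (ZMod.natCast_eq_zero_iff m (κ p)).mp hm0
    have hmem : D.HasWalkIn (Vset p) m x₀ x₀ := hNA m (by omega) hdm
    have hfin := hwa.trans (hmem.trans hwb)
    rwa [← hMsum] at hfin
  have hsurj : ∀ j : ZMod (κ p), ∃ x ∈ Vset p, u p x = j := by
    intro j
    have hval : (j - u p x₀).val < κ p := ZMod.val_lt _
    have hmge : κ p ≤ m₁ + m₂ :=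
      Nat.le_of_dvd (by omega) (hκ.1 x₀ _ hx₀ (by omega) hmposwalk)
    obtain ⟨z, hz, hwz, -⟩ := hmposwalk.shorten (j - u p x₀).val (by omega)
    refine ⟨z, hz, ?_⟩
    have hlab := label_walkIn hu hwz
    rw [hlab, ZMod.natCast_val, ZMod.cast_id]
    ring
  have hchain : D.HasWalk i v w := chainWalk hD p ζ hp hpζ htr v hv i hi w hw
  constructor
  · rintro ⟨⟨k₁, ⟨x₁, hx₁, hux₁, hadj₁⟩, hl₁⟩, ⟨k₂, ⟨x₂, hx₂, hux₂, hadj₂⟩, hl₂⟩⟩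
    refine ⟨NW + i + 1, by omega, fun L hL hLl => ?_⟩
    constructor
    · intro x hxp hux
      set M := L - (i + 1) with hMdef
      have hM : NW ≤ M := by omega
      have hML : M + (i + 1) = L := by omega
      have hMz : (M : ZMod (κ p)) = u p x₁ - u p x := by
        have hcast : ((M + (i + 1) : ℕ) : ZMod (κ p)) = (L : ZMod (κ p)) := by rw [hML]
        push_cast at hcast
        rw [hLl, hl₁] at hcast
        rw [hux₁, hux]
        linear_combination hcast
      have hwxx₁ := huniform x hxp x₁ hx₁ M hM hMz
      have hwalk : D.HasWalk (M + 1 + i) x w :=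
        (hwxx₁.hasWalk.trans hadj₁.hasWalk).trans hchain
      rwa [show M + 1 + i = L by omega] at hwalk
    · intro x hxp hux
      set M := L - (i + 1) with hMdef
      have hM : NW ≤ M := by omega
      have hML : M + (i + 1) = L := by omega
      have hMz : (M : ZMod (κ p)) = u p x₂ - u p x := by
        have hcast : ((M + (i + 1) : ℕ) : ZMod (κ p)) = (L : ZMod (κ p)) := by rw [hML]
        push_cast at hcast
        rw [hLl, hl₂] at hcast
        rw [hux₂, hux]
        linear_combination hcast
      have hwxx₂ := huniform x hxp x₂ hx₂ M hM hMz
      have hwalk : D.HasWalk (M + 1 + i) x w :=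
        (hwxx₂.hasWalk.trans hadj₂.hasWalk).trans hchain
      rwa [show M + 1 + i = L by omega] at hwalk
  · rintro ⟨N, hN1, hN⟩
    set L := κ p * (N + i + 1) + l.val with hLdef
    have hLN : N ≤ L := by
      have h := Nat.le_mul_of_pos_left (N + i + 1) hκpos
      omega
    have hLl : (L : ZMod (κ p)) = l := by
      rw [hLdef]
      push_cast
      rw [ZMod.natCast_self, ZMod.natCast_val, ZMod.cast_id]
      ring
    obtain ⟨hpart₁, hpart₂⟩ := hN L hLN hLl
    constructor
    · obtain ⟨x, hxp, hux⟩ := hsurj j₁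
      have hwalk := hpart₁ x hxp hux
      obtain ⟨M, z, hML, hwin, hzp, hadj⟩ :=
        decomp hD p ζ i hp hpζ htr v hv hi w hw hxp hwalk
      refine ⟨u p z, ⟨z, hzp, rfl, hadj⟩, ?_⟩
      have hlab : u p z = u p x + ((M : ℕ) : ZMod (κ p)) := label_walkIn hu hwin
      have hcast : ((M + 1 + i : ℕ) : ZMod (κ p)) = l := by rw [hML]; exact hLl
      push_cast at hcast
      rw [hux] at hlab
      linear_combination - hcast - hlab
    · obtain ⟨x, hxp, hux⟩ := hsurj j₂
      have hwalk := hpart₂ x hxp hux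
      obtain ⟨M, z, hML, hwin, hzp, hadj⟩ :=
        decomp hD p ζ i hp hpζ htr v hv hi w hw hxp hwalk
      refine ⟨u p z, ⟨z, hzp, rfl, hadj⟩, ?_⟩
      have hlab : u p z = u p x + ((M : ℕ) : ZMod (κ p)) := label_walkIn hu hwin
      have hcast : ((M + 1 + i : ℕ) : ZMod (κ p)) = l := by rw [hML]; exact hLl
      push_cast at hcast
      rw [hux] at hlab
      linear_combination - hcast - hlab
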